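/- A position (n_0, n_1, ..., n_{m-1}) in Moore's nim MN(m,k) is a P-position if and only if, when each n_i is written in binary, for each bit position the number of indices i with that bit of n_i equal to 1 is divisible by k+1. -/

import Mathlib

/-- `IsN move x`: `x` is an N-position (next player wins) for the game with
move relation `move` (least fixed point; correct for short games). -/
inductive IsN {α : Type*} (move : α → α → Prop) : α → Prop
  | intro (x y : α) (hxy : move x y) (hy : ∀ z, move y z → IsN move z) : IsN move x

/-- `IsP move x`: `x` is a P-position (previous player wins) under normal play. -/
def IsP {α : Type*} (move : α → α → Prop) (x : α) : Prop :=
  ∀ y, move x y → IsN move y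

/-- Move relation of extended circular nim `ECN(m_S, k)`: reduce some piles,
all lying among `k` piles taken every `s`-th pile (for some `s ∈ S`) starting
at some index `i`, removing at least one token in total. -/
def ecnMove (m : ℕ) (S : Set ℕ) (k : ℕ) (x y : Fin m → ℕ) : Prop :=
  y ≠ x ∧ (∀ j, y j ≤ x j) ∧
    ∃ s ∈ S, ∃ i : ℕ, ∀ j : Fin m, y j ≠ x j → ∃ t < k, (j : ℕ) = (i + t * s) % m

/-- `cyc m Q n` : some cyclic rotation of `n`, or of its reversal, satisfies `Q`
(the relation `M ∈_↻ P`). -/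
def cyc (m : ℕ) (Q : (Fin m → ℕ) → Prop) (n : Fin m → ℕ) : Prop :=
  ∃ r : ℕ,
    Q (fun j => n ⟨(j.1 + r) % m, Nat.mod_lt _ (Nat.lt_of_le_of_lt (Nat.zero_le _) j.isLt)⟩) ∨
    Q (fun j => n ⟨(r + (m - j.1)) % m, Nat.mod_lt _ (Nat.lt_of_le_of_lt (Nat.zero_le _) j.isLt)⟩)

/-- Move relation of Moore's nim `MN(m, k)`: reduce at most `k` piles,
removing at least one token in total. -/
def mooreMove (m k : ℕ) (x y : Fin m → ℕ) : Prop :=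
  y ≠ x ∧ (∀ j, y j ≤ x j) ∧ (Finset.univ.filter (fun j => y j ≠ x j)).card ≤ k

def goodMN (k : ℕ) {m : ℕ} (x : Fin m → ℕ) : Prop :=
  ∀ d : ℕ, (k + 1) ∣ (Finset.univ.filter (fun i => (x i).testBit d)).card

lemma arith1 (n c : ℕ) (hn : 0 < n) : n ∣ (n - c % n) % n + c := by
  have h1 : c % n < n := Nat.mod_lt _ hn
  rcases Nat.eq_zero_or_pos (c % n) with h | h
  · have h2 : (n - c % n) % n = 0 := by rw [h, Nat.sub_zero, Nat.mod_self]
    rw [h2, Nat.zero_add]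
    exact Nat.dvd_of_mod_eq_zero h
  · have h2 : (n - c % n) % n = n - c % n := Nat.mod_eq_of_lt (by omega)
    rw [h2]
    have h3 := Nat.div_add_mod c n
    have h4 : n - c % n + c = n + n * (c / n) := by omega
    rw [h4]
    exact Nat.dvd_add (dvd_refl n) (Dvd.intro _ rfl)

lemma arith2 (n c : ℕ) : n ∣ c - c % n := by
  have h3 := Nat.div_add_mod c n
  have h4 : c - c % n = n * (c / n) := by omega
  rw [h4]
  exact Dvd.intro _ rfl

lemma moore_claim (m k : ℕ) (D : ℕ) :
    ∀ (x : Fin m → ℕ), (∀ i, x i < 2 ^ D) → ∀ A : Finset (Fin m), A.card ≤ k →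
      ∃ y : Fin m → ℕ, (∀ i, y i < 2 ^ D) ∧
        ∃ B : Finset (Fin m), Disjoint A B ∧ (A ∪ B).card ≤ k ∧
          (∀ i, i ∉ A → i ∉ B → y i = x i) ∧ (∀ i ∈ B, y i < x i) ∧
          ∀ d : ℕ, (k + 1) ∣ (Finset.univ.filter fun i => (y i).testBit d).card := by
  classical
  induction D with
  | zero =>
    intro x hx A hA
    refine ⟨x, hx, ∅, Finset.disjoint_empty_right _, by simpa using hA,
      fun i _ _ => rfl, by simp, fun d => ?_⟩
    have hx0 : ∀ i, x i = 0 := fun i => Nat.lt_one_iff.mp (by simpa using hx i)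
    simp [hx0]
  | succ D ih =>
    intro x hx A hA
    set C : Finset (Fin m) := Finset.univ.filter (fun i => i ∉ A ∧ (x i).testBit D) with hC
    set c := C.card with hc
    set r := c % (k + 1) with hr
    have hCA : ∀ i ∈ C, i ∉ A := by
      intro i hi
      exact (Finset.mem_filter.mp hi).2.1
    have hCbit : ∀ i ∈ C, (x i).testBit D := by
      intro i hi
      exact (Finset.mem_filter.mp hi).2.2
    set x' : Fin m → ℕ := fun i => x i % 2 ^ D with hx'def
    have hx' : ∀ i, x' i < 2 ^ D := fun i => Nat.mod_lt _ (Nat.two_pow_pos D)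
    have hdiv : ∀ i, x i / 2 ^ D ≤ 1 := by
      intro i
      have h2 : x i < 2 * 2 ^ D := by
        have := hx i
        rw [pow_succ, Nat.mul_comm] at this
        exact this
      have := (Nat.div_lt_iff_lt_mul (Nat.two_pow_pos D)).mpr h2
      omega
    have hbitD : ∀ i, (x i).testBit D = decide (x i / 2 ^ D = 1) := by
      intro i
      have hh : x i / 2 ^ D ≤ 1 := hdiv i
      rw [Nat.testBit_eq_decide_div_mod_eq]
      interval_cases h : x i / 2 ^ D <;> simp
    by_cases h1 : (k + 1 - r) % (k + 1) ≤ A.card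
    · -- Case 1: no new recruits needed; set bit D on a := (k+1-r)%(k+1) piles of A
      obtain ⟨S, hSA, hScard⟩ := Finset.exists_subset_card_eq h1
      obtain ⟨y', hy'lt, B, hdisj, hcard, heq, hlt, hcnt⟩ := ih x' hx' A hA
      set bit : Fin m → ℕ := fun i => if i ∈ A then (if i ∈ S then 1 else 0) else x i / 2 ^ D
        with hbitdef
      set y : Fin m → ℕ := fun i => 2 ^ D * bit i + y' i with hydef
      have hbit1 : ∀ i, bit i ≤ 1 := by
        intro i
        simp only [hbitdef]
        split
        · split <;> omega
        · exact hdiv i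
      have hylt : ∀ i, y i < 2 ^ (D + 1) := by
        intro i
        have h2 := hy'lt i
        have h3 := hbit1 i
        simp only [hydef, pow_succ]
        nlinarith [Nat.two_pow_pos D]
      have htb : ∀ i d, (y i).testBit d =
          if d < D then (y' i).testBit d else (bit i).testBit (d - D) := by
        intro i d
        exact Nat.testBit_two_pow_mul_add (bit i) (hy'lt i) d
      refine ⟨y, hylt, B, hdisj, hcard, ?_, ?_, ?_⟩
      · intro i hiA hiB
        have h2 : bit i = x i / 2 ^ D := by simp [hbitdef, hiA]
        have h3 : y' i = x' i := heq i hiA hiB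
        simp only [hydef, h2, h3, hx'def]
        exact Nat.div_add_mod _ _
      · intro i hiB
        have hiA : i ∉ A := fun h => (Finset.disjoint_left.mp hdisj h) hiB
        have h2 : bit i = x i / 2 ^ D := by simp [hbitdef, hiA]
        have h3 : y' i < x' i := hlt i hiB
        simp only [hx'def] at h3
        have h4 := Nat.div_add_mod (x i) (2 ^ D)
        simp only [hydef, h2]
        omega
      · intro d
        rcases lt_trichotomy d D with hd | hd | hd
        · have : (Finset.univ.filter fun i => (y i).testBit d) =
              (Finset.univ.filter fun i => (y' i).testBit d) := by
            apply Finset.filter_congr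
            intro i _
            simp [htb i d, hd]
          rw [this]
          exact hcnt d
        · rw [hd]
          have hfe : (Finset.univ.filter fun i => (y i).testBit D) = S ∪ C := by
            ext i
            simp only [Finset.mem_filter, Finset.mem_univ, true_and, Finset.mem_union]
            rw [htb i D]
            simp only [lt_irrefl, if_false, Nat.sub_self]
            by_cases hiA : i ∈ A
            · by_cases hiS : i ∈ S
              · simp [hbitdef, hiA, hiS, hC]
              · have : i ∉ C := fun h => hCA i h hiA
                simp [hbitdef, hiA, hiS, this, hC]
            · have h2 : bit i = x i / 2 ^ D := by simp [hbitdef, hiA]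
              have h3 : i ∉ S := fun h => hiA (hSA h)
              rw [h2]
              simp only [h3, false_or]
              rw [hC, Finset.mem_filter]
              simp only [Finset.mem_univ, true_and, hiA, not_false_iff, true_and]
              rw [hbitD i]
              have := hdiv i
              rcases Nat.eq_zero_or_pos (x i / 2 ^ D) with h4 | h4
              · simp [h4]
              · have h5 : x i / 2 ^ D = 1 := by omega
                simp [h5]
          rw [hfe]
          have hdisjSC : Disjoint S C := by
            rw [Finset.disjoint_left]
            intro i hiS hiC
            exact hCA i hiC (hSA hiS)
          rw [Finset.card_union_of_disjoint hdisjSC, hScard]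
          exact arith1 (k + 1) c (Nat.succ_pos k)
        · have : (Finset.univ.filter fun i => (y i).testBit d) = ∅ := by
            apply Finset.filter_false_of_mem
            intro i _
            have h2 : y i < 2 ^ d := lt_of_lt_of_le (hylt i) (Nat.pow_le_pow_right (by norm_num) hd)
            simp [Nat.testBit_lt_two_pow h2]
          rw [this]
          simp
    · -- Case 2: recruit r new piles from C, clearing their bit D
      push_neg at h1
      have hrne : r ≠ 0 := by
        intro h
        rw [h] at h1
        simp at h1
      have hrlt : r < k + 1 := Nat.mod_lt _ (Nat.succ_pos k)
      have h1' : (k + 1 - r) % (k + 1) = k + 1 - r := Nat.mod_eq_of_lt (by omega)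
      rw [h1'] at h1
      have hAk : A.card + r ≤ k := by omega
      have hrc : r ≤ c := Nat.mod_le _ _
      obtain ⟨T, hTC, hTcard⟩ := Finset.exists_subset_card_eq hrc
      have hAT : Disjoint A T := by
        rw [Finset.disjoint_right]
        intro i hiT
        exact hCA i (hTC hiT)
      set A' := A ∪ T with hA'def
      have hA'card : A'.card ≤ k := by
        rw [hA'def, Finset.card_union_of_disjoint hAT, hTcard]
        exact hAk
      obtain ⟨y', hy'lt, B', hdisj', hcard', heq', hlt', hcnt'⟩ := ih x' hx' A' hA'card
      set bit : Fin m → ℕ := fun i => if i ∈ A' then 0 else x i / 2 ^ D with hbitdef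
      set y : Fin m → ℕ := fun i => 2 ^ D * bit i + y' i with hydef
      have hbit1 : ∀ i, bit i ≤ 1 := by
        intro i
        simp only [hbitdef]
        split
        · omega
        · exact hdiv i
      have hylt : ∀ i, y i < 2 ^ (D + 1) := by
        intro i
        have h2 := hy'lt i
        have h3 := hbit1 i
        simp only [hydef, pow_succ]
        nlinarith [Nat.two_pow_pos D]
      have htb : ∀ i d, (y i).testBit d =
          if d < D then (y' i).testBit d else (bit i).testBit (d - D) := by
        intro i d
        exact Nat.testBit_two_pow_mul_add (bit i) (hy'lt i) d
      refine ⟨y, hylt, T ∪ B', ?_, ?_, ?_, ?_, ?_⟩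
      · rw [Finset.disjoint_union_right]
        exact ⟨hAT, Finset.disjoint_left.mpr fun i hiA hiB' =>
          Finset.disjoint_left.mp hdisj' (Finset.mem_union_left _ hiA) hiB'⟩
      · have : A ∪ (T ∪ B') = A' ∪ B' := by
          rw [hA'def, Finset.union_assoc]
        rw [this]
        exact hcard'
      · intro i hiA hiB
        have hiT : i ∉ T := fun h => hiB (Finset.mem_union_left _ h)
        have hiB' : i ∉ B' := fun h => hiB (Finset.mem_union_right _ h)
        have hiA' : i ∉ A' := by
          rw [hA'def, Finset.mem_union]
          tauto
        have h2 : bit i = x i / 2 ^ D := by simp [hbitdef, hiA']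
        have h3 : y' i = x' i := heq' i hiA' hiB'
        simp only [hydef, h2, h3, hx'def]
        exact Nat.div_add_mod _ _
      · intro i hiB
        rcases Finset.mem_union.mp hiB with hiT | hiB'
        · have hiA' : i ∈ A' := Finset.mem_union_right _ hiT
          have h2 : bit i = 0 := by simp [hbitdef, hiA']
          have h3 : 2 ^ D ≤ x i := Nat.ge_two_pow_of_testBit (hCbit i (hTC hiT))
          have h4 := hy'lt i
          simp only [hydef, h2, Nat.mul_zero, Nat.zero_add]
          omega
        · have hiA' : i ∉ A' := fun h => Finset.disjoint_left.mp hdisj' h hiB'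
          have h2 : bit i = x i / 2 ^ D := by simp [hbitdef, hiA']
          have h3 : y' i < x' i := hlt' i hiB'
          simp only [hx'def] at h3
          have h4 := Nat.div_add_mod (x i) (2 ^ D)
          simp only [hydef, h2]
          omega
      · intro d
        rcases lt_trichotomy d D with hd | hd | hd
        · have : (Finset.univ.filter fun i => (y i).testBit d) =
              (Finset.univ.filter fun i => (y' i).testBit d) := by
            apply Finset.filter_congr
            intro i _
            simp [htb i d, hd]
          rw [this]
          exact hcnt' d
        · rw [hd]
          have hfe : (Finset.univ.filter fun i => (y i).testBit D) = C \ T := by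
            ext i
            simp only [Finset.mem_filter, Finset.mem_univ, true_and, Finset.mem_sdiff]
            rw [htb i D]
            simp only [lt_irrefl, if_false, Nat.sub_self]
            by_cases hiA' : i ∈ A'
            · have h2 : bit i = 0 := by simp [hbitdef, hiA']
              rw [h2]
              simp only [Nat.zero_testBit, Bool.false_eq_true, false_iff, not_and, not_not]
              intro hiC
              rcases Finset.mem_union.mp hiA' with hiA | hiT
              · exact absurd hiA (hCA i hiC)
              · exact hiT
            · have h2 : bit i = x i / 2 ^ D := by simp [hbitdef, hiA']
              have hiA : i ∉ A := fun h => hiA' (Finset.mem_union_left _ h)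
              have hiT : i ∉ T := fun h => hiA' (Finset.mem_union_right _ h)
              rw [h2]
              constructor
              · intro h
                refine ⟨?_, hiT⟩
                rw [hC, Finset.mem_filter]
                refine ⟨Finset.mem_univ _, hiA, ?_⟩
                rw [hbitD i]
                have h5 := hdiv i
                rcases Nat.eq_zero_or_pos (x i / 2 ^ D) with h4 | h4
                · rw [h4] at h
                  simp at h
                · have h6 : x i / 2 ^ D = 1 := by omega
                  simp [h6]
              · rintro ⟨hiC, -⟩
                have h4 := hCbit i hiC
                rw [hbitD i] at h4
                have h5 : x i / 2 ^ D = 1 := by simpa using h4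
                rw [h5]
                simp
          rw [hfe]
          rw [Finset.card_sdiff_of_subset hTC, hTcard]
          exact arith2 (k + 1) c
        · have : (Finset.univ.filter fun i => (y i).testBit d) = ∅ := by
            apply Finset.filter_false_of_mem
            intro i _
            have h2 : y i < 2 ^ d := lt_of_lt_of_le (hylt i) (Nat.pow_le_pow_right (by norm_num) hd)
            simp [Nat.testBit_lt_two_pow h2]
          rw [this]
          simp

lemma moore_keyA {m k : ℕ} {x y : Fin m → ℕ} (hx : goodMN k x) (h : mooreMove m k x y) :
    ¬ goodMN k y := by
  classical
  obtain ⟨hne, hle, hcard⟩ := h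
  intro hy
  set N := Finset.univ.sup x with hN
  have hxN : ∀ i, x i ≤ N := fun i => Finset.le_sup (Finset.mem_univ i)
  have hbound : ∀ i d, N < d → (x i).testBit d = false ∧ (y i).testBit d = false := by
    intro i d hd
    have h2 : x i < 2 ^ d :=
      lt_of_le_of_lt (hxN i)
        (lt_of_lt_of_le (Nat.lt_two_pow_self (n := N)) (Nat.pow_le_pow_right (by norm_num) (le_of_lt hd)))
    exact ⟨Nat.testBit_lt_two_pow h2, Nat.testBit_lt_two_pow (lt_of_le_of_lt (hle i) h2)⟩
  set U := (Finset.range (N + 1)).filter (fun d => ∃ i, (x i).testBit d ≠ (y i).testBit d)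
    with hU
  have hUne : U.Nonempty := by
    have hex : ∃ i, y i ≠ x i := by
      by_contra hco
      push_neg at hco
      exact hne (funext hco)
    obtain ⟨i, hi⟩ := hex
    have hex2 : ∃ d, (x i).testBit d ≠ (y i).testBit d := by
      by_contra hco
      push_neg at hco
      exact hi (Nat.eq_of_testBit_eq (fun d => (hco d).symm))
    obtain ⟨d, hd⟩ := hex2
    refine ⟨d, Finset.mem_filter.mpr ⟨Finset.mem_range.mpr ?_, ⟨i, hd⟩⟩⟩
    by_contra hdn
    push_neg at hdn
    obtain ⟨h1, h2⟩ := hbound i d (by omega)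
    exact hd (h1.trans h2.symm)
  set dm := U.max' hUne with hdm
  have hdmU := U.max'_mem hUne
  have habove : ∀ i d, dm < d → (x i).testBit d = (y i).testBit d := by
    intro i d hd
    by_cases hdN : d ≤ N
    · by_contra hq
      have hmem : d ∈ U := Finset.mem_filter.mpr ⟨Finset.mem_range.mpr (by omega), ⟨i, hq⟩⟩
      have := U.le_max' d hmem
      omega
    · obtain ⟨h1, h2⟩ := hbound i d (by omega)
      rw [h1, h2]
  have hkey : ∀ i, (x i).testBit dm ≠ (y i).testBit dm →
      (x i).testBit dm = true ∧ (y i).testBit dm = false := by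
    intro i hdiff
    rcases Bool.eq_false_or_eq_true ((x i).testBit dm) with hb | hb
    · refine ⟨hb, ?_⟩
      rcases Bool.eq_false_or_eq_true ((y i).testBit dm) with h2 | h2
      · exact absurd (hb.trans h2.symm) hdiff
      · exact h2
    · have hy' : (y i).testBit dm = true := by
        rcases Bool.eq_false_or_eq_true ((y i).testBit dm) with h2 | h2
        · exact h2
        · exact absurd (hb.trans h2.symm) hdiff
      have hlt : x i < y i :=
        Nat.lt_of_testBit dm hb hy' (fun j hj => habove i j hj)
      exact absurd (hle i) (not_le.mpr hlt)
  set Fx := Finset.univ.filter (fun i => (x i).testBit dm) with hFx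
  set Fy := Finset.univ.filter (fun i => (y i).testBit dm) with hFy
  have hsub : Fy ⊆ Fx := by
    intro i hi
    rw [hFy, Finset.mem_filter] at hi
    rw [hFx, Finset.mem_filter]
    refine ⟨Finset.mem_univ _, ?_⟩
    by_contra hxb
    have hxb' : (x i).testBit dm = false := by
      rcases Bool.eq_false_or_eq_true ((x i).testBit dm) with h2 | h2
      · exact absurd h2 hxb
      · exact h2
    have hdiff : (x i).testBit dm ≠ (y i).testBit dm := by
      rw [hxb', hi.2]
      simp
    obtain ⟨h1, _⟩ := hkey i hdiff
    rw [h1] at hxb'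
    simp at hxb'
  obtain ⟨i0, hi0⟩ := (Finset.mem_filter.mp hdmU).2
  obtain ⟨hx0, hy0⟩ := hkey i0 hi0
  have hi0x : i0 ∈ Fx := Finset.mem_filter.mpr ⟨Finset.mem_univ _, hx0⟩
  have hi0y : i0 ∉ Fy := by
    rw [hFy, Finset.mem_filter]
    rw [hy0]
    simp
  have hdiffsub : Fx \ Fy ⊆ Finset.univ.filter (fun j => y j ≠ x j) := by
    intro i hi
    rw [Finset.mem_sdiff, hFx, hFy, Finset.mem_filter, Finset.mem_filter] at hi
    rw [Finset.mem_filter]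
    refine ⟨Finset.mem_univ _, ?_⟩
    intro heq
    exact hi.2 ⟨Finset.mem_univ _, by rw [heq]; exact hi.1.2⟩
  have hc1 : (Fx \ Fy).card ≤ k := le_trans (Finset.card_le_card hdiffsub) hcard
  have hc2 : (Fx \ Fy).card = Fx.card - Fy.card := Finset.card_sdiff_of_subset hsub
  have hc3 : Fy.card ≤ Fx.card := Finset.card_le_card hsub
  have hc4 : 0 < (Fx \ Fy).card :=
    Finset.card_pos.mpr ⟨i0, Finset.mem_sdiff.mpr ⟨hi0x, hi0y⟩⟩
  have hd1 : (k + 1) ∣ Fx.card := hx dm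
  have hd2 : (k + 1) ∣ Fy.card := hy dm
  have hd3 : (k + 1) ∣ Fx.card - Fy.card := Nat.dvd_sub hd1 hd2
  rw [hc2] at hc1 hc4
  have := Nat.le_of_dvd hc4 hd3
  omega

lemma moore_keyB {m k : ℕ} {x : Fin m → ℕ} (hx : ¬ goodMN k x) :
    ∃ y, mooreMove m k x y ∧ goodMN k y := by
  classical
  set D := Finset.univ.sup x with hD
  have hxD : ∀ i, x i < 2 ^ D := fun i =>
    lt_of_le_of_lt (Finset.le_sup (Finset.mem_univ i)) (Nat.lt_two_pow_self (n := D))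
  obtain ⟨y, hylt, B, hdisj, hcard, heq, hlt, hcnt⟩ :=
    moore_claim m k D x hxD ∅ (Nat.zero_le k)
  have hBcard : B.card ≤ k := by simpa using hcard
  have heq' : ∀ i, i ∉ B → y i = x i := fun i hi => heq i (Finset.notMem_empty i) hi
  have hyne : y ≠ x := by
    intro h
    rw [h] at hcnt
    exact hx hcnt
  refine ⟨y, ⟨hyne, ?_, ?_⟩, hcnt⟩
  · intro j
    by_cases hj : j ∈ B
    · exact le_of_lt (hlt j hj)
    · exact le_of_eq (heq' j hj)
  · refine le_trans (Finset.card_le_card ?_) hBcard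
    intro i hi
    rw [Finset.mem_filter] at hi
    by_contra hiB
    exact hi.2 (heq' i hiB)

lemma moore_sum_lt {m k : ℕ} {x y : Fin m → ℕ} (h : mooreMove m k x y) :
    ∑ i, y i < ∑ i, x i := by
  obtain ⟨hne, hle, -⟩ := h
  have hex : ∃ i, y i < x i := by
    by_contra hco
    push_neg at hco
    exact hne (funext fun i => le_antisymm (hle i) (hco i))
  obtain ⟨i, hi⟩ := hex
  exact Finset.sum_lt_sum (fun j _ => hle j) ⟨i, Finset.mem_univ i, hi⟩

lemma isN_iff {α : Type*} (move : α → α → Prop) (x : α) :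
    IsN move x ↔ ∃ y, move x y ∧ IsP move y := by
  constructor
  · rintro ⟨x, y, hxy, hy⟩
    exact ⟨y, hxy, hy⟩
  · rintro ⟨y, hxy, hy⟩
    exact IsN.intro x y hxy hy

lemma moore_main {m k : ℕ} : ∀ (N : ℕ) (n : Fin m → ℕ), (∑ i, n i) ≤ N →
    (IsP (mooreMove m k) n ↔ goodMN k n) := by
  intro N
  induction N with
  | zero =>
    intro n hn
    have hn0 : ∀ i, n i = 0 := by
      intro i
      have h1 : n i ≤ ∑ j, n j := Finset.single_le_sum (fun j _ => Nat.zero_le _) (Finset.mem_univ i)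
      omega
    constructor
    · intro _
      intro d
      have : (Finset.univ.filter fun i => (n i).testBit d) = ∅ := by
        apply Finset.filter_false_of_mem
        intro i _
        simp [hn0 i]
      rw [this]
      simp
    · intro _ y hy
      obtain ⟨hne, hle, -⟩ := hy
      refine absurd (funext fun i => ?_) hne
      have h1 := hle i
      have h2 := hn0 i
      omega
  | succ N ih =>
    intro n hn
    constructor
    · intro hP
      by_contra hbad
      obtain ⟨y, hmove, hgood⟩ := moore_keyB hbad
      have hNy := hP y hmove
      rw [isN_iff] at hNy
      obtain ⟨z, hyz, hz⟩ := hNy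
      have hs1 : ∑ i, y i < ∑ i, n i := moore_sum_lt hmove
      have hs2 : ∑ i, z i < ∑ i, y i := moore_sum_lt hyz
      have hzgood : goodMN k z := (ih z (by omega)).mp hz
      exact moore_keyA hgood hyz hzgood
    · intro hgood y hmove
      have hy : ¬ goodMN k y := moore_keyA hgood hmove
      obtain ⟨z, hyz, hgz⟩ := moore_keyB hy
      have hs1 : ∑ i, y i < ∑ i, n i := moore_sum_lt hmove
      have hs2 : ∑ i, z i < ∑ i, y i := moore_sum_lt hyz
      exact IsN.intro y z hyz ((ih z (by omega)).mpr hgz)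

theorem moore_P_iff (m k : ℕ) (n : Fin m → ℕ) :
    IsP (mooreMove m k) n ↔
      ∀ d : ℕ, (k + 1) ∣ (Finset.univ.filter (fun i => (n i).testBit d)).card := by
  exact moore_main (∑ i, n i) n le_rfl
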